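/- Let r ≥ 2 be an integer. The map σ : (0, π/(r+1)) → (0, (r+1)^{(r+1)/2}/(2(r−1)^{(r−1)/2})) defined by σ(φ) = (sin((r+1)φ))^{(r+1)/2} / (sin(2φ)·(sin((r−1)φ))^{(r−1)/2}) is a strictly decreasing bijection. -/

import Mathlib

open Real Set Filter Topology

noncomputable def kfun (u : ℝ) : ℝ := u ^ 2 * Real.cos u / Real.sin u

noncomputable def k1fun (u : ℝ) : ℝ := (u * Real.sin (2 * u) - u ^ 2) / Real.sin u ^ 2

lemma hfun_neg {u : ℝ} (hu : u ∈ Ioo 0 π) :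
    Real.sin u ^ 2 * Real.cos u - 2 * u * Real.sin u + u ^ 2 * Real.cos u < 0 := by
  obtain ⟨hu0, huπ⟩ := hu
  have hs : 0 < Real.sin u := Real.sin_pos_of_pos_of_lt_pi hu0 huπ
  rcases le_or_gt (Real.cos u) 0 with hc | hc
  · nlinarith [mul_pos hu0 hs, sq_nonneg (Real.sin u), sq_nonneg u]
  · have hu2 : u < π / 2 := by
      by_contra h
      push_neg at h
      have : Real.cos u ≤ 0 := Real.cos_nonpos_of_pi_div_two_le_of_le h (by linarith [Real.pi_pos])
      linarith
    have h1 : Real.sin u < u := Real.sin_lt hu0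
    have h2 : u < Real.tan u := Real.lt_tan hu0 hu2
    have h3 : u * Real.cos u < Real.sin u := by
      rw [Real.tan_eq_sin_div_cos] at h2
      have := mul_lt_mul_of_pos_right h2 hc
      rwa [div_mul_cancel₀ _ (ne_of_gt hc)] at this
    nlinarith [mul_pos (mul_pos (sub_pos.2 h1) (show (0:ℝ) < u + Real.sin u by linarith)) hc, mul_pos hu0 (sub_pos.2 h3)]

lemma kfun_hasDeriv {u : ℝ} (hu : u ∈ Ioo 0 π) : HasDerivAt kfun (k1fun u) u := by
  have hs : 0 < Real.sin u := Real.sin_pos_of_pos_of_lt_pi hu.1 hu.2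
  have h : HasDerivAt (fun u : ℝ => u ^ 2 * Real.cos u / Real.sin u)
      ((((2 * u ^ 1) * Real.cos u + u ^ 2 * (-Real.sin u)) * Real.sin u
        - u ^ 2 * Real.cos u * Real.cos u) / (Real.sin u) ^ 2) u :=
    ((hasDerivAt_pow 2 u).mul (Real.hasDerivAt_cos u)).div (Real.hasDerivAt_sin u)
      (ne_of_gt hs)
  have heq : (((2 * u ^ 1) * Real.cos u + u ^ 2 * (-Real.sin u)) * Real.sin u
        - u ^ 2 * Real.cos u * Real.cos u) / (Real.sin u) ^ 2 = k1fun u := by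
    unfold k1fun
    rw [Real.sin_two_mul]
    have hss := Real.sin_sq_add_cos_sq u
    field_simp
    linear_combination (-u ^ 2) * hss
  rw [← heq]
  exact h

lemma k1fun_hasDeriv_neg {u : ℝ} (hu : u ∈ Ioo 0 π) :
    ∃ v, HasDerivAt k1fun v u ∧ v < 0 := by
  have hs : 0 < Real.sin u := Real.sin_pos_of_pos_of_lt_pi hu.1 hu.2
  have hlin : HasDerivAt (fun u : ℝ => 2 * u) 2 u := by
    simpa using (hasDerivAt_id u).const_mul 2
  have h2u : HasDerivAt (fun u : ℝ => Real.sin (2 * u)) (Real.cos (2 * u) * 2) u :=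
    (Real.hasDerivAt_sin (2 * u)).comp u hlin
  have hN : HasDerivAt (fun u : ℝ => u * Real.sin (2 * u) - u ^ 2)
      ((1 * Real.sin (2 * u) + u * (Real.cos (2 * u) * 2)) - 2 * u ^ 1) u :=
    ((hasDerivAt_id u).mul h2u).sub (hasDerivAt_pow 2 u)
  have hD : HasDerivAt (fun u : ℝ => Real.sin u ^ 2)
      (2 * Real.sin u ^ 1 * Real.cos u) u := by
    simpa using (Real.hasDerivAt_sin u).fun_pow 2
  refine ⟨_, hN.div hD (by positivity), ?_⟩
  apply div_neg_of_neg_of_pos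
  · have key := hfun_neg hu
    have h1 : ((1 * Real.sin (2 * u) + u * (Real.cos (2 * u) * 2)) - 2 * u ^ 1) * Real.sin u ^ 2
        - (u * Real.sin (2 * u) - u ^ 2) * (2 * Real.sin u ^ 1 * Real.cos u)
        = 2 * Real.sin u *
          (Real.sin u ^ 2 * Real.cos u - 2 * u * Real.sin u + u ^ 2 * Real.cos u) := by
      rw [Real.sin_two_mul, Real.cos_two_mul']
      linear_combination (-2 * u * Real.sin u ^ 2) * Real.sin_sq_add_cos_sq u
    rw [h1]
    exact mul_neg_of_pos_of_neg (by positivity) key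
  · positivity

lemma tendsto_sin_div : Tendsto (fun u : ℝ => Real.sin u / u) (𝓝[≠] 0) (𝓝 1) := by
  have hslope := hasDerivAt_iff_tendsto_slope.1 (Real.hasDerivAt_sin 0)
  simp only [Real.sin_zero, Real.cos_zero, slope_fun_def, sub_zero, vsub_eq_sub] at hslope
  exact hslope.congr (fun u => by simp [div_eq_inv_mul])

lemma tendsto_div_sin : Tendsto (fun u : ℝ => u / Real.sin u) (𝓝[≠] 0) (𝓝 1) := by
  have := tendsto_sin_div.inv₀ one_ne_zero
  simp only [inv_one] at this
  exact this.congr fun u => by rw [inv_div]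

lemma kfun_continuousOn : ContinuousOn kfun (Ico 0 π) := by
  intro u hu
  rcases eq_or_lt_of_le hu.1 with h0 | h0
  · have ht : Tendsto kfun (𝓝[>] (0:ℝ)) (𝓝 0) := by
      have t1 : Tendsto (fun u : ℝ => u * Real.cos u) (𝓝[>] (0:ℝ)) (𝓝 0) := by
        have := ((continuous_id.fun_mul Real.continuous_cos).tendsto 0).mono_left
          (nhdsWithin_le_nhds (s := Ioi (0:ℝ)))
        simpa using this
      have t2 : Tendsto (fun u : ℝ => u / Real.sin u) (𝓝[>] (0:ℝ)) (𝓝 1) :=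
        tendsto_div_sin.mono_left (nhdsWithin_mono 0 fun x hx => ne_of_gt hx)
      have := t1.mul t2
      simp only [zero_mul] at this
      exact this.congr fun u => by unfold kfun; ring
    rw [← h0]
    have : ContinuousWithinAt kfun (Ioi 0) 0 := by
      unfold ContinuousWithinAt
      rw [show kfun 0 = 0 by unfold kfun; simp]
      exact ht
    apply ContinuousWithinAt.mono _ (show Ico (0:ℝ) π ⊆ insert 0 (Ioi 0) by
      intro x hx; rcases eq_or_lt_of_le hx.1 with h | h
      · exact Or.inl h.symm
      · exact Or.inr h)
    rwa [continuousWithinAt_insert_self]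
  · have hs : Real.sin u ≠ 0 := ne_of_gt (Real.sin_pos_of_pos_of_lt_pi h0 hu.2)
    exact (ContinuousAt.div (by fun_prop) Real.continuous_sin.continuousAt hs).continuousWithinAt

lemma kfun_concave : StrictConcaveOn ℝ (Ico 0 π) kfun := by
  apply strictConcaveOn_of_deriv2_neg (convex_Ico 0 π) kfun_continuousOn
  intro x hx
  rw [interior_Ico] at hx
  obtain ⟨v, hv, hvneg⟩ := k1fun_hasDeriv_neg hx
  have hev : deriv kfun =ᶠ[𝓝 x] k1fun := by
    filter_upwards [isOpen_Ioo.mem_nhds hx] with y hy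
    exact (kfun_hasDeriv hy).deriv
  have h2 : deriv^[2] kfun x = v := by
    show deriv (deriv kfun) x = v
    rw [Filter.EventuallyEq.deriv_eq hev, hv.deriv]
  rw [h2]; exact hvneg

lemma kfun_zero : kfun 0 = 0 := by unfold kfun; simp

lemma key_ineq {b φ : ℝ} (hb : 1 ≤ b) (hφ : 0 < φ) (hlt : (b + 2) * φ < π) :
    kfun ((b + 2) * φ) < kfun (b * φ) + kfun (2 * φ) := by
  set a := b + 2 with ha_def
  have ha : 0 < a := by linarith
  have hmem0 : (0:ℝ) ∈ Ico 0 π := ⟨le_refl 0, Real.pi_pos⟩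
  have hmema : a * φ ∈ Ico 0 π := ⟨by positivity, hlt⟩
  have hne : (0:ℝ) ≠ a * φ := ne_of_lt (by positivity)
  have hpb : (0:ℝ) < b / a := by positivity
  have hp2 : (0:ℝ) < 2 / a := by positivity
  have hsum : 2 / a + b / a = 1 := by field_simp [ha_def]; ring
  have hsum' : b / a + 2 / a = 1 := by linarith
  have h1 := kfun_concave.2 hmem0 hmema hne hp2 hpb hsum
  have h2 := kfun_concave.2 hmem0 hmema hne hpb hp2 hsum'
  simp only [smul_eq_mul, mul_zero, kfun_zero, zero_add] at h1 h2
  have e1 : b / a * (a * φ) = b * φ := by field_simp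
  have e2 : 2 / a * (a * φ) = 2 * φ := by field_simp
  rw [e1] at h1
  rw [e2] at h2
  have : kfun (a * φ) = b / a * kfun (a * φ) + 2 / a * kfun (a * φ) := by
    rw [← add_mul, hsum', one_mul]
  linarith

/-- `σ(φ) = (sin((r+1)φ))^{(r+1)/2}/(sin(2φ)(sin((r−1)φ))^{(r−1)/2})` is a
strictly decreasing bijection from `(0, π/(r+1))` onto
`(0, (r+1)^{(r+1)/2}/(2(r−1)^{(r−1)/2}))`. -/
theorem sigma_strictAnti_bijOn (r : ℕ) (hr : 2 ≤ r) :
    let σ : ℝ → ℝ := fun φ =>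
      Real.sin (((r : ℝ) + 1) * φ) ^ (((r : ℝ) + 1) / 2) /
        (Real.sin (2 * φ) * Real.sin (((r : ℝ) - 1) * φ) ^ (((r : ℝ) - 1) / 2))
    let xstar : ℝ := ((r : ℝ) + 1) ^ (((r : ℝ) + 1) / 2) /
      (2 * ((r : ℝ) - 1) ^ (((r : ℝ) - 1) / 2))
    StrictAntiOn σ (Set.Ioo 0 (π / (r + 1))) ∧
      Set.BijOn σ (Set.Ioo 0 (π / (r + 1))) (Set.Ioo 0 xstar) := by
  intro σ xstar
  have hr2 : (2 : ℝ) ≤ (r : ℝ) := by exact_mod_cast hr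
  set a : ℝ := (r : ℝ) + 1 with ha_def
  set b : ℝ := (r : ℝ) - 1 with hb_def
  set m : ℝ := π / ((r : ℝ) + 1) with hm_def
  have hπ : 0 < π := Real.pi_pos
  have ha3 : 3 ≤ a := by rw [ha_def]; linarith
  have ha0 : 0 < a := by linarith
  have hb1 : 1 ≤ b := by rw [hb_def]; linarith
  have hb0 : 0 < b := by linarith
  have hab : b + 2 = a := by rw [ha_def, hb_def]; ring
  have hba : b < a := by linarith
  have hm0 : 0 < m := div_pos hπ ha0
  have ham : a * m = π := by rw [hm_def, ← ha_def]; field_simp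
  -- sin positivity on the interval
  have hsin : ∀ φ ∈ Ioo (0:ℝ) m,
      (0 < a * φ ∧ a * φ < π) ∧ (0 < 2 * φ ∧ 2 * φ < π) ∧ (0 < b * φ ∧ b * φ < π) := by
    intro φ hφ
    obtain ⟨hφ0, hφm⟩ := hφ
    have haφ : a * φ < π := by
      calc a * φ < a * m := by exact mul_lt_mul_of_pos_left hφm ha0
        _ = π := ham
    refine ⟨⟨by positivity, haφ⟩, ⟨by positivity, ?_⟩, ⟨by positivity, ?_⟩⟩
    · nlinarith
    · nlinarith
  have hsa : ∀ φ ∈ Ioo (0:ℝ) m, 0 < Real.sin (a * φ) := fun φ hφ =>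
    Real.sin_pos_of_pos_of_lt_pi ((hsin φ hφ).1).1 ((hsin φ hφ).1).2
  have hs2 : ∀ φ ∈ Ioo (0:ℝ) m, 0 < Real.sin (2 * φ) := fun φ hφ =>
    Real.sin_pos_of_pos_of_lt_pi ((hsin φ hφ).2.1).1 ((hsin φ hφ).2.1).2
  have hsb : ∀ φ ∈ Ioo (0:ℝ) m, 0 < Real.sin (b * φ) := fun φ hφ =>
    Real.sin_pos_of_pos_of_lt_pi ((hsin φ hφ).2.2).1 ((hsin φ hφ).2.2).2
  -- the logarithmic version
  set F : ℝ → ℝ := fun φ => a / 2 * Real.log (Real.sin (a * φ)) - Real.log (Real.sin (2 * φ))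
    - b / 2 * Real.log (Real.sin (b * φ)) with hF_def
  have hσF : ∀ φ ∈ Ioo (0:ℝ) m, σ φ = Real.exp (F φ) := by
    intro φ hφ
    have h1 := hsa φ hφ; have h2 := hs2 φ hφ; have h3 := hsb φ hφ
    show Real.sin (a * φ) ^ (a / 2) / (Real.sin (2 * φ) * Real.sin (b * φ) ^ (b / 2)) = _
    rw [Real.rpow_def_of_pos h1, Real.rpow_def_of_pos h3, ← Real.exp_log h2,
      ← Real.exp_add, ← Real.exp_sub]
    congr 1
    rw [hF_def]; ring
  -- derivative of F is negative
  have hFd : ∀ φ ∈ Ioo (0:ℝ) m, ∃ d, HasDerivAt F d φ ∧ d < 0 := by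
    intro φ hφ
    have h1 := hsa φ hφ; have h2 := hs2 φ hφ; have h3 := hsb φ hφ
    have hφ0 := hφ.1
    have hst : ∀ t : ℝ, HasDerivAt (fun φ : ℝ => Real.sin (t * φ)) (Real.cos (t * φ) * t) φ := by
      intro t
      exact (Real.hasDerivAt_sin (t * φ)).comp φ (by simpa using (hasDerivAt_id φ).const_mul t)
    have hA : HasDerivAt (fun φ : ℝ => Real.log (Real.sin (a * φ)))
        (Real.cos (a * φ) * a / Real.sin (a * φ)) φ := (hst a).log (ne_of_gt h1)
    have hB : HasDerivAt (fun φ : ℝ => Real.log (Real.sin (2 * φ)))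
        (Real.cos (2 * φ) * 2 / Real.sin (2 * φ)) φ := (hst 2).log (ne_of_gt h2)
    have hC : HasDerivAt (fun φ : ℝ => Real.log (Real.sin (b * φ)))
        (Real.cos (b * φ) * b / Real.sin (b * φ)) φ := (hst b).log (ne_of_gt h3)
    refine ⟨_, ((hA.const_mul (a / 2)).sub hB).sub (hC.const_mul (b / 2)), ?_⟩
    have hkey : kfun (a * φ) < kfun (b * φ) + kfun (2 * φ) := by
      rw [← hab]; exact key_ineq hb1 hφ0 (by rw [hab]; exact ((hsin φ hφ).1).2)
    have heq : a / 2 * (Real.cos (a * φ) * a / Real.sin (a * φ))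
        - Real.cos (2 * φ) * 2 / Real.sin (2 * φ)
        - b / 2 * (Real.cos (b * φ) * b / Real.sin (b * φ))
        = (kfun (a * φ) - kfun (b * φ) - kfun (2 * φ)) / (2 * φ ^ 2) := by
      unfold kfun
      field_simp
      ring
    rw [heq]
    apply div_neg_of_neg_of_pos (by linarith) (by positivity)
  have hFcont : ContinuousOn F (Ioo 0 m) := fun φ hφ =>
    ((hFd φ hφ).choose_spec.1).continuousAt.continuousWithinAt
  have hFanti : StrictAntiOn F (Ioo 0 m) := by
    apply strictAntiOn_of_deriv_neg (convex_Ioo 0 m) hFcont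
    intro φ hφ
    rw [interior_Ioo] at hφ
    obtain ⟨d, hd, hdneg⟩ := hFd φ hφ
    rwa [hd.deriv]
  have hσanti : StrictAntiOn σ (Ioo 0 m) := by
    intro x hx y hy hxy
    rw [hσF x hx, hσF y hy]
    exact Real.exp_lt_exp.2 (hFanti hx hy hxy)
  have hσcont : ContinuousOn σ (Ioo 0 m) :=
    (Real.continuous_exp.comp_continuousOn hFcont).congr hσF
  -- limit at 0⁺
  have hTt : ∀ t : ℝ, 0 < t →
      Tendsto (fun φ : ℝ => Real.sin (t * φ) / (t * φ)) (𝓝[>] 0) (𝓝 1) := by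
    intro t ht
    apply tendsto_sin_div.comp
    rw [tendsto_nhdsWithin_iff]
    constructor
    · have h : Tendsto (fun φ : ℝ => t * φ) (𝓝 0) (𝓝 (t * 0)) :=
        (continuous_const.mul continuous_id).tendsto 0
      rw [mul_zero] at h
      exact h.mono_left nhdsWithin_le_nhds
    · filter_upwards [self_mem_nhdsWithin] with φ (hφ : φ ∈ Ioi 0)
      exact ne_of_gt (mul_pos ht hφ)
  set H : ℝ → ℝ := fun φ => (Real.sin (a * φ) / (a * φ)) ^ (a / 2) /
      ((Real.sin (2 * φ) / (2 * φ)) * (Real.sin (b * φ) / (b * φ)) ^ (b / 2)) with hH_def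
  have hHlim : Tendsto H (𝓝[>] 0) (𝓝 1) := by
    have hrp : ∀ c : ℝ, Tendsto (fun x : ℝ => x ^ c) (𝓝 1) (𝓝 1) := by
      intro c
      have := (Real.continuousAt_rpow_const 1 c (Or.inl one_ne_zero)).tendsto
      simpa using this
    have t1 := (hrp (a / 2)).comp (hTt a ha0)
    have t2 := hTt 2 two_pos
    have t3 := (hrp (b / 2)).comp (hTt b hb0)
    have := t1.div (t2.mul t3) (by norm_num)
    rw [mul_one, div_one] at this
    exact this
  have hσeqH : ∀ φ ∈ Ioo (0:ℝ) m, σ φ = H φ * xstar := by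
    intro φ hφ
    have h1 := hsa φ hφ; have h2 := hs2 φ hφ; have h3 := hsb φ hφ
    have hφ0 := hφ.1
    show Real.sin (a * φ) ^ (a / 2) / (Real.sin (2 * φ) * Real.sin (b * φ) ^ (b / 2)) = _
    simp only [hH_def]
    have e1 : (Real.sin (a * φ) / (a * φ)) ^ (a / 2)
        = Real.sin (a * φ) ^ (a / 2) / (a ^ (a / 2) * φ ^ (a / 2)) := by
      rw [Real.div_rpow (le_of_lt h1) (by positivity), Real.mul_rpow (le_of_lt ha0) (le_of_lt hφ0)]
    have e3 : (Real.sin (b * φ) / (b * φ)) ^ (b / 2)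
        = Real.sin (b * φ) ^ (b / 2) / (b ^ (b / 2) * φ ^ (b / 2)) := by
      rw [Real.div_rpow (le_of_lt h3) (by positivity), Real.mul_rpow (le_of_lt hb0) (le_of_lt hφ0)]
    have e4 : φ ^ (a / 2) = φ ^ (b / 2) * φ := by
      rw [show a / 2 = b / 2 + 1 by rw [← hab]; ring, Real.rpow_add hφ0, Real.rpow_one]
    rw [e1, e3, e4]
    show _ = _ / (_ * _) * (a ^ (a / 2) / (2 * b ^ (b / 2)))
    have p1 : (0:ℝ) < Real.sin (a * φ) ^ (a / 2) := Real.rpow_pos_of_pos h1 _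
    have p3 : (0:ℝ) < Real.sin (b * φ) ^ (b / 2) := Real.rpow_pos_of_pos h3 _
    have pa : (0:ℝ) < a ^ (a / 2) := Real.rpow_pos_of_pos ha0 _
    have pb : (0:ℝ) < b ^ (b / 2) := Real.rpow_pos_of_pos hb0 _
    have pφ : (0:ℝ) < φ ^ (b / 2) := Real.rpow_pos_of_pos hφ0 _
    field_simp
  have hlim0 : Tendsto σ (𝓝[>] (0:ℝ)) (𝓝 xstar) := by
    have : Tendsto (fun φ => H φ * xstar) (𝓝[>] (0:ℝ)) (𝓝 (1 * xstar)) :=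
      hHlim.mul_const xstar
    rw [one_mul] at this
    apply this.congr'
    filter_upwards [Ioo_mem_nhdsGT_of_mem (⟨le_refl 0, hm0⟩ : (0:ℝ) ∈ Ico 0 m)] with φ hφ
    exact (hσeqH φ hφ).symm
  -- limit at m⁻
  have hs2m : 0 < Real.sin (2 * m) := by
    apply Real.sin_pos_of_pos_of_lt_pi (by positivity)
    nlinarith [ham, hm0, ha3]
  have hsbm : 0 < Real.sin (b * m) := by
    apply Real.sin_pos_of_pos_of_lt_pi (by positivity)
    calc b * m < a * m := mul_lt_mul_of_pos_right hba hm0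
      _ = π := ham
  have hlimm : Tendsto σ (𝓝[<] m) (𝓝 0) := by
    have hnum : Tendsto (fun φ => Real.sin (a * φ) ^ (a / 2)) (𝓝[<] m) (𝓝 0) := by
      have hin : Tendsto (fun φ => Real.sin (a * φ)) (𝓝[<] m) (𝓝 0) := by
        have h : Tendsto (fun φ : ℝ => Real.sin (a * φ)) (𝓝 m) (𝓝 (Real.sin (a * m))) :=
          (Real.continuous_sin.comp (continuous_const.mul continuous_id)).tendsto m
        rw [ham, Real.sin_pi] at h
        exact h.mono_left nhdsWithin_le_nhds
      have hout := (Real.continuousAt_rpow_const 0 (a / 2) (Or.inr (by positivity))).tendsto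
      rw [Real.zero_rpow (by positivity)] at hout
      exact hout.comp hin
    have hden : Tendsto (fun φ => Real.sin (2 * φ) * Real.sin (b * φ) ^ (b / 2)) (𝓝[<] m)
        (𝓝 (Real.sin (2 * m) * Real.sin (b * m) ^ (b / 2))) := by
      apply Filter.Tendsto.mono_left _ nhdsWithin_le_nhds
      apply Filter.Tendsto.mul
      · exact ((Real.continuous_sin.comp (continuous_const.mul continuous_id)).tendsto m :
          Tendsto (fun φ : ℝ => Real.sin (2 * φ)) (𝓝 m) (𝓝 (Real.sin (2 * m))))
      · exact ((Real.continuousAt_rpow_const _ (b / 2) (Or.inl (ne_of_gt hsbm))).tendsto).comp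
          (((Real.continuous_sin.comp (continuous_const.mul continuous_id)).tendsto m :
            Tendsto (fun φ : ℝ => Real.sin (b * φ)) (𝓝 m) (𝓝 (Real.sin (b * m)))))
    have hD : (0:ℝ) < Real.sin (2 * m) * Real.sin (b * m) ^ (b / 2) := by
      have := Real.rpow_pos_of_pos hsbm (b / 2); positivity
    have := hnum.div hden (ne_of_gt hD)
    rw [zero_div] at this
    exact this
  -- σ ≤ xstar on the interval
  have hle : ∀ φ ∈ Ioo (0:ℝ) m, σ φ ≤ xstar := by
    intro φ hφ
    apply ge_of_tendsto hlim0
    filter_upwards [Ioo_mem_nhdsGT_of_mem (⟨le_refl 0, hφ.1⟩ : (0:ℝ) ∈ Ico 0 φ)] with ψ hψ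
    exact le_of_lt (hσanti ⟨hψ.1, lt_trans hψ.2 hφ.2⟩ hφ hψ.2)
  have hmaps : MapsTo σ (Ioo 0 m) (Ioo 0 xstar) := by
    intro φ hφ
    have h1 := hsa φ hφ; have h2 := hs2 φ hφ; have h3 := hsb φ hφ
    constructor
    · show 0 < Real.sin (a * φ) ^ (a / 2) / (Real.sin (2 * φ) * Real.sin (b * φ) ^ (b / 2))
      have := Real.rpow_pos_of_pos h1 (a / 2)
      have := Real.rpow_pos_of_pos h3 (b / 2)
      positivity
    · have hhalf : φ / 2 ∈ Ioo (0:ℝ) m := ⟨by linarith [hφ.1], by linarith [hφ.1, hφ.2]⟩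
      calc σ φ < σ (φ / 2) := hσanti hhalf hφ (by linarith [hφ.1])
        _ ≤ xstar := hle _ hhalf
  -- surjectivity
  have hsurj : SurjOn σ (Ioo 0 m) (Ioo 0 xstar) := by
    intro y hy
    obtain ⟨hy0, hyx⟩ := hy
    obtain ⟨ψ2, hψ2y, hψ2mem⟩ :=
      ((hlimm.eventually_lt_const hy0).and
        (eventually_of_mem (Ioo_mem_nhdsLT_of_mem ⟨hm0, le_refl m⟩) fun x hx => hx)).exists
    obtain ⟨ψ1, hyψ1, hψ1lt⟩ :=
      ((hlim0.eventually_const_lt hyx).and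
        (eventually_of_mem (Ioo_mem_nhdsGT_of_mem (⟨le_refl 0, hψ2mem.1⟩ : (0:ℝ) ∈ Ico 0 ψ2))
          fun x hx => hx)).exists
    have hsub : Icc ψ1 ψ2 ⊆ Ioo 0 m := fun x hx =>
      ⟨lt_of_lt_of_le hψ1lt.1 hx.1, lt_of_le_of_lt hx.2 hψ2mem.2⟩
    obtain ⟨x, hx, hxy⟩ := intermediate_value_Icc' (le_of_lt hψ1lt.2) (hσcont.mono hsub)
      (⟨le_of_lt hψ2y, le_of_lt hyψ1⟩ : y ∈ Icc (σ ψ2) (σ ψ1))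
    exact ⟨x, hsub hx, hxy⟩
  exact ⟨hσanti, hmaps, hσanti.injOn, hsurj⟩
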